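/- Let α be an algebraic integer lying in a number field K such that every conjugate of α (over ℚ) has absolute value 1. Then α is a root of unity; in particular α^k = 1 where k is the order of the group of roots of unity of K. -/

import Mathlib

open NumberField

/-- **Kronecker.** Let `α` be an algebraic integer lying in a number field `K`
such that every conjugate of `α` over `ℚ` has absolute value `1`. Then `α` is a root of
unity; in particular `α ^ k = 1`, where `k` is the order of the group of roots of unity
of `K`. -/
theorem stmt1 (K : Type*) [Field K] [NumberField K] (α : K)
    (hint : IsIntegral ℤ α)
    (habs : ∀ σ : K →+* ℂ, ‖σ α‖ = 1) :
    (∃ m : ℕ, 0 < m ∧ α ^ m = 1) ∧ α ^ (NumberField.Units.torsionOrder K : ℕ) = 1 := by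
  obtain ⟨m, hm, hαm⟩ := NumberField.Embeddings.pow_eq_one_of_norm_eq_one K ℂ hint habs
  refine ⟨⟨m, hm, hαm⟩, ?_⟩
  set x : 𝓞 K := ⟨α, hint⟩ with hx
  have hxm : x ^ m = 1 := by
    ext
    push_cast
    exact hαm
  have hxu : IsUnit x := by
    refine IsUnit.of_mul_eq_one (x ^ (m - 1)) ?_
    rw [← pow_succ', Nat.sub_add_cancel hm, hxm]
  have hu : hxu.unit ∈ NumberField.Units.torsion K := by
    rw [NumberField.Units.torsion, CommGroup.mem_torsion, isOfFinOrder_iff_pow_eq_one]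
    exact ⟨m, hm, by ext; simp [hxm]⟩
  have : hxu.unit ^ (NumberField.Units.torsionOrder K : ℕ) = 1 := by
    have := @pow_card_eq_one' (NumberField.Units.torsion K) _ ⟨hxu.unit, hu⟩
    rw [Subtype.ext_iff] at this
    exact this
  have hx1 : x ^ (NumberField.Units.torsionOrder K : ℕ) = 1 := by
    have := congrArg (Units.coeHom _) this
    simpa using this
  have := congrArg (algebraMap (𝓞 K) K) hx1
  simp only [map_pow, map_one] at this
  exact this
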